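/- Let Ŝ and S be d×d symmetric matrices, m < d, and suppose λ_m(S) > λ_{m+1}(S). Let P^m(Ŝ) and P^m(S) denote the orthogonal projection matrices onto the span of the m leading eigenvectors of Ŝ and S respectively. Then ‖P^m(Ŝ) - P^m(S)‖_F ≤ (2√(2m)/(λ_m(S) - λ_{m+1}(S))) · ‖Ŝ - S‖₂. -/

import Mathlib

/-- The spectral (operator) norm of a real `d × d` matrix. -/
noncomputable def specNorm {d : ℕ} (M : Matrix (Fin d) (Fin d) ℝ) : ℝ :=
  ‖Matrix.toEuclideanCLM (𝕜 := ℝ) M‖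

/-- The Frobenius norm of a real `d × d` matrix. -/
noncomputable def frobNorm {d : ℕ} (M : Matrix (Fin d) (Fin d) ℝ) : ℝ :=
  Real.sqrt (∑ j, ∑ k, (M j k) ^ 2)

open Matrix Finset

namespace DKaux

variable {d : ℕ}

/-- Frobenius inner product as an entrywise sum. -/
noncomputable def fip (A B : Matrix (Fin d) (Fin d) ℝ) : ℝ := ∑ i, ∑ j, A i j * B i j

lemma fip_eq_trace (A B : Matrix (Fin d) (Fin d) ℝ) : fip A B = (A * Bᵀ).trace := by
  simp [fip, Matrix.trace, Matrix.diag, Matrix.mul_apply]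

lemma fip_self_nonneg (A : Matrix (Fin d) (Fin d) ℝ) : 0 ≤ fip A A := by
  apply Finset.sum_nonneg; intro i _
  exact Finset.sum_nonneg fun j _ => mul_self_nonneg _

lemma fip_prod (A B : Matrix (Fin d) (Fin d) ℝ) :
    fip A B = ∑ p : Fin d × Fin d, A p.1 p.2 * B p.1 p.2 := by
  rw [fip, Fintype.sum_prod_type]

lemma trace_mul_le (X Y : Matrix (Fin d) (Fin d) ℝ) :
    (X * Y).trace ≤ Real.sqrt (fip X X) * Real.sqrt (fip Y Y) := by
  have h1 : (X * Y).trace = fip X Yᵀ := by rw [fip_eq_trace, Matrix.transpose_transpose]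
  have h2 : fip Yᵀ Yᵀ = fip Y Y := by
    rw [fip, Finset.sum_comm]; simp [fip, Matrix.transpose_apply]
  rw [h1, ← h2, fip_prod, fip_prod, fip_prod]
  have := Real.sum_mul_le_sqrt_mul_sqrt (Finset.univ : Finset (Fin d × Fin d))
    (fun p => X p.1 p.2) (fun p => Yᵀ p.1 p.2)
  simpa [sq] using this


noncomputable def specNorm' (M : Matrix (Fin d) (Fin d) ℝ) : ℝ :=
  ‖Matrix.toEuclideanCLM (𝕜 := ℝ) M‖

lemma mulVec_sq_le (A : Matrix (Fin d) (Fin d) ℝ) (v : Fin d → ℝ) :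
    ∑ i, (A.mulVec v i) ^ 2 ≤ (specNorm' A) ^ 2 * ∑ i, (v i) ^ 2 := by
  have key : ‖(WithLp.equiv 2 (Fin d → ℝ)).symm (A.mulVec v)‖ ≤
      specNorm' A * ‖(WithLp.equiv 2 (Fin d → ℝ)).symm v‖ := by
    have h := (Matrix.toEuclideanCLM (𝕜 := ℝ) A).le_opNorm
      ((WithLp.equiv 2 (Fin d → ℝ)).symm v)
    rwa [WithLp.equiv_symm_apply, Matrix.toEuclideanCLM_toLp] at h
  have hn : ∀ w : Fin d → ℝ, ‖(WithLp.equiv 2 (Fin d → ℝ)).symm w‖ =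
      Real.sqrt (∑ i, (w i) ^ 2) := by
    intro w
    rw [EuclideanSpace.norm_eq]
    congr 1
    apply Finset.sum_congr rfl
    intro i _
    rw [Real.norm_eq_abs, sq_abs]
    rfl
  rw [hn, hn] at key
  have h0 : (0:ℝ) ≤ ∑ i, (A.mulVec v i) ^ 2 := Finset.sum_nonneg fun i _ => sq_nonneg _
  have h1 : (0:ℝ) ≤ ∑ i, (v i) ^ 2 := Finset.sum_nonneg fun i _ => sq_nonneg _
  have := mul_self_le_mul_self (Real.sqrt_nonneg _) key
  rw [Real.mul_self_sqrt h0] at this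
  calc ∑ i, (A.mulVec v i) ^ 2 ≤ (specNorm' A * Real.sqrt (∑ i, (v i)^2)) *
        (specNorm' A * Real.sqrt (∑ i, (v i)^2)) := this
    _ = (specNorm' A)^2 * (Real.sqrt (∑ i, (v i)^2) * Real.sqrt (∑ i, (v i)^2)) := by ring
    _ = (specNorm' A)^2 * ∑ i, (v i)^2 := by rw [Real.mul_self_sqrt h1]

lemma fip_mul_left_le (A X : Matrix (Fin d) (Fin d) ℝ) :
    fip (A * X) (A * X) ≤ (specNorm' A) ^ 2 * fip X X := by
  have hcol : ∀ k, ∑ i, ((A * X) i k) * ((A * X) i k) ≤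
      (specNorm' A) ^ 2 * ∑ i, (X i k) * (X i k) := by
    intro k
    have := mulVec_sq_le A (fun l => X l k)
    simpa [Matrix.mul_apply, Matrix.mulVec, dotProduct, sq] using this
  calc fip (A * X) (A * X) = ∑ k, ∑ i, ((A * X) i k) * ((A * X) i k) := by
        rw [fip, Finset.sum_comm]
    _ ≤ ∑ k, (specNorm' A) ^ 2 * ∑ i, (X i k) * (X i k) :=
        Finset.sum_le_sum fun k _ => hcol k
    _ = (specNorm' A) ^ 2 * fip X X := by
        rw [← Finset.mul_sum, fip, Finset.sum_comm]

lemma fip_transpose (X : Matrix (Fin d) (Fin d) ℝ) : fip Xᵀ Xᵀ = fip X X := by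
  rw [fip, Finset.sum_comm]; simp [fip, Matrix.transpose_apply]

section Ortho

variable (f : Fin d → EuclideanSpace ℝ (Fin d))

lemma orth_sum (horth : Orthonormal ℝ f) (j j' : Fin d) :
    ∑ l, f j l * f j' l = if j = j' then (1:ℝ) else 0 := by
  have := orthonormal_iff_ite.mp horth j j'
  rw [PiLp.inner_apply] at this
  simpa [RCLike.inner_apply, conj_trivial, mul_comm] using this

lemma complete_sum (horth : Orthonormal ℝ f) (i l : Fin d) :
    ∑ j, f j i * f j l = if i = l then (1:ℝ) else 0 := by
  set F : Matrix (Fin d) (Fin d) ℝ := Matrix.of (fun j i => f j i) with hF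
  have h1 : F * Fᵀ = 1 := by
    ext j j'
    simp only [Matrix.mul_apply, Matrix.transpose_apply, Matrix.one_apply, hF, Matrix.of_apply]
    exact orth_sum f horth j j'
  have h2 : Fᵀ * F = 1 := mul_eq_one_comm.mp h1
  have := congrFun (congrFun h2 i) l
  simpa [Matrix.mul_apply, Matrix.transpose_apply, Matrix.one_apply, hF] using this

end Ortho

lemma card_filter_lt {m : ℕ} (hmd : m ≤ d) :
    (Finset.univ.filter (fun j : Fin d => (j : ℕ) < m)).card = m := by
  have : Finset.univ.filter (fun j : Fin d => (j : ℕ) < m) =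
      (Finset.univ : Finset (Fin m)).map (Fin.castLEEmb hmd) := by
    ext j
    simp only [Finset.mem_filter, Finset.mem_univ, true_and, Finset.mem_map,
      Fin.castLEEmb_apply]
    constructor
    · intro hj
      exact ⟨⟨(j:ℕ), hj⟩, by ext; simp⟩
    · rintro ⟨i, rfl⟩
      exact i.isLt
  rw [this, Finset.card_map, Finset.card_univ, Fintype.card_fin]

section Proj

variable {m : ℕ} (f : Fin d → EuclideanSpace ℝ (Fin d)) (P : Matrix (Fin d) (Fin d) ℝ)
variable (hP : ∀ i k, P i k = ∑ j ∈ Finset.univ.filter (fun j : Fin d => (j : ℕ) < m),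
      f j i * f j k)

include hP

lemma proj_symm : Pᵀ = P := by
  ext i k
  rw [Matrix.transpose_apply, hP, hP]
  exact Finset.sum_congr rfl fun j _ => mul_comm _ _

lemma proj_idem (horth : Orthonormal ℝ f) : P * P = P := by
  ext i k
  rw [Matrix.mul_apply]
  calc ∑ l, P i l * P l k
      = ∑ l, ∑ j ∈ Finset.univ.filter (fun j : Fin d => (j : ℕ) < m),
          ∑ j' ∈ Finset.univ.filter (fun j : Fin d => (j : ℕ) < m),
          (f j i * f j' k) * (f j l * f j' l) := by
        apply Finset.sum_congr rfl; intro l _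
        rw [hP, hP, Finset.sum_mul_sum]
        apply Finset.sum_congr rfl; intro j _
        apply Finset.sum_congr rfl; intro j' _
        ring
    _ = ∑ j ∈ Finset.univ.filter (fun j : Fin d => (j : ℕ) < m),
          ∑ j' ∈ Finset.univ.filter (fun j : Fin d => (j : ℕ) < m),
          (f j i * f j' k) * ∑ l, (f j l * f j' l) := by
        rw [Finset.sum_comm]
        apply Finset.sum_congr rfl; intro j _
        rw [Finset.sum_comm]
        apply Finset.sum_congr rfl; intro j' _
        rw [Finset.mul_sum]
    _ = P i k := by
        rw [hP]
        apply Finset.sum_congr rfl; intro j hj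
        rw [Finset.sum_eq_single j]
        · rw [orth_sum f horth j j, if_pos rfl, mul_one]
        · intro j' _ hj'
          rw [orth_sum f horth j j', if_neg (Ne.symm hj'), mul_zero]
        · intro h; exact absurd hj h

lemma proj_trace (horth : Orthonormal ℝ f) (hmd : m ≤ d) : P.trace = m := by
  have : P.trace = ∑ j ∈ Finset.univ.filter (fun j : Fin d => (j : ℕ) < m),
      ∑ i, f j i * f j i := by
    rw [Matrix.trace]
    unfold Matrix.diag
    rw [show ∑ i, P i i = ∑ i, ∑ j ∈ Finset.univ.filter (fun j : Fin d => (j : ℕ) < m),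
      f j i * f j i from Finset.sum_congr rfl fun i _ => hP i i]
    exact Finset.sum_comm
  rw [this]
  have : ∀ j ∈ Finset.univ.filter (fun j : Fin d => (j : ℕ) < m),
      ∑ i, f j i * f j i = 1 := by
    intro j _
    rw [orth_sum f horth j j, if_pos rfl]
  rw [Finset.sum_congr rfl this, Finset.sum_const, card_filter_lt hmd, nsmul_eq_mul, mul_one]

end Proj

lemma quad_nonneg (Q : Matrix (Fin d) (Fin d) ℝ) (hQs : Qᵀ = Q) (hQi : Q * Q = Q)
    (v : Fin d → ℝ) : 0 ≤ ∑ i, ∑ l, v i * Q i l * v l := by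
  have key : ∑ i, ∑ l, v i * Q i l * v l = ∑ i, (Q.mulVec v i) ^ 2 := by
    have hQQ : ∀ l k, ∑ i, Q i l * Q i k = Q l k := by
      intro l k
      have : (Qᵀ * Q) l k = Q l k := by rw [hQs, hQi]
      simpa [Matrix.mul_apply, Matrix.transpose_apply] using this
    calc ∑ i, ∑ l, v i * Q i l * v l
        = ∑ l, ∑ k, v l * v k * ∑ i, Q i l * Q i k := by
          apply Finset.sum_congr rfl; intro l _
          apply Finset.sum_congr rfl; intro k _
          rw [hQQ]; ring
      _ = ∑ l, ∑ k, ∑ i, (Q i l * v l) * (Q i k * v k) := by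
          apply Finset.sum_congr rfl; intro l _
          apply Finset.sum_congr rfl; intro k _
          rw [Finset.mul_sum]
          apply Finset.sum_congr rfl; intro i _
          ring
      _ = ∑ i, ∑ l, ∑ k, (Q i l * v l) * (Q i k * v k) := by
          rw [show (∑ l, ∑ k, ∑ i, (Q i l * v l) * (Q i k * v k))
              = ∑ l, ∑ i, ∑ k, (Q i l * v l) * (Q i k * v k)
            from Finset.sum_congr rfl fun l _ => Finset.sum_comm]
          exact Finset.sum_comm
      _ = ∑ i, (Q.mulVec v i) ^ 2 := by
          apply Finset.sum_congr rfl; intro i _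
          rw [Matrix.mulVec, dotProduct, sq, ← Finset.sum_mul_sum]
  rw [key]
  exact Finset.sum_nonneg fun i _ => sq_nonneg _

section Curvature

variable {m : ℕ} (A : Matrix (Fin d) (Fin d) ℝ) (lam : Fin d → ℝ)
  (f : Fin d → EuclideanSpace ℝ (Fin d))

/-- Spectral decomposition entrywise. -/
lemma spectral (horth : Orthonormal ℝ f)
    (heig : ∀ j i, (∑ k, A i k * f j k) = lam j * f j i) (i k : Fin d) :
    A i k = ∑ j, lam j * (f j i * f j k) := by
  calc A i k = ∑ l, A i l * (if l = k then (1:ℝ) else 0) := by simp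
    _ = ∑ l, A i l * ∑ j, f j l * f j k := by
        apply Finset.sum_congr rfl; intro l _
        rw [complete_sum f horth l k]
    _ = ∑ l, ∑ j, A i l * (f j l * f j k) := by
        apply Finset.sum_congr rfl; intro l _
        rw [Finset.mul_sum]
    _ = ∑ j, (∑ l, A i l * f j l) * f j k := by
        rw [Finset.sum_comm]
        apply Finset.sum_congr rfl; intro j _
        rw [Finset.sum_mul]
        apply Finset.sum_congr rfl; intro l _
        ring
    _ = ∑ j, lam j * (f j i * f j k) := by
        apply Finset.sum_congr rfl; intro j _
        rw [heig j i]
        ring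

lemma curvature (hm1 : 1 ≤ m) (hmd : m < d)
    (horth : Orthonormal ℝ f) (hdesc : Antitone lam)
    (heig : ∀ j i, (∑ k, A i k * f j k) = lam j * f j i)
    (P Q : Matrix (Fin d) (Fin d) ℝ)
    (hP : ∀ i k, P i k = ∑ j ∈ Finset.univ.filter (fun j : Fin d => (j : ℕ) < m),
      f j i * f j k)
    (hQs : Qᵀ = Q) (hQi : Q * Q = Q) (hQt : Q.trace = m) :
    (lam ⟨m - 1, by have := hm1; omega⟩ - lam ⟨m, hmd⟩) * ((m : ℝ) - (P * Q).trace) ≤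
      (A * (P - Q)).trace := by
  classical
  set s : Finset (Fin d) := Finset.univ.filter (fun j : Fin d => (j : ℕ) < m) with hs
  set q : Fin d → ℝ := fun j => ∑ i, ∑ l, f j i * Q i l * f j l with hq
  -- basic facts about q
  have hq0 : ∀ j, 0 ≤ q j := fun j => quad_nonneg Q hQs hQi (fun i => f j i)
  have hq1 : ∀ j, q j ≤ 1 := by
    intro j
    have h1s : (1 - Q)ᵀ = 1 - Q := by
      rw [Matrix.transpose_sub, Matrix.transpose_one, hQs]
    have h1i : (1 - Q) * (1 - Q) = 1 - Q := by
      rw [mul_sub, mul_one, sub_mul, one_mul, hQi, sub_self, sub_zero]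
    have := quad_nonneg (1 - Q) h1s h1i (fun i => f j i)
    have hsplit : ∑ i, ∑ l, f j i * (1 - Q) i l * f j l = 1 - q j := by
      have : ∀ i l, f j i * (1 - Q) i l * f j l =
          f j i * ((if i = l then (1:ℝ) else 0)) * f j l - f j i * Q i l * f j l := by
        intro i l
        rw [Matrix.sub_apply, Matrix.one_apply]
        ring
      rw [show ∑ i, ∑ l, f j i * (1 - Q) i l * f j l
          = (∑ i, ∑ l, f j i * (if i = l then (1:ℝ) else 0) * f j l) - q j by
        rw [hq, ← Finset.sum_sub_distrib]
        apply Finset.sum_congr rfl; intro i _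
        rw [← Finset.sum_sub_distrib]
        exact Finset.sum_congr rfl fun l _ => this i l]
      have hdiag : ∑ i, ∑ l, f j i * (if i = l then (1:ℝ) else 0) * f j l
          = ∑ i, f j i * f j i := by
        apply Finset.sum_congr rfl; intro i _
        rw [Finset.sum_eq_single i]
        · rw [if_pos rfl, mul_one]
        · intro b _ hb
          rw [if_neg (fun h => hb h.symm), mul_zero, zero_mul]
        · intro h; exact absurd (Finset.mem_univ i) h
      rw [hdiag, orth_sum f horth j j, if_pos rfl]
    rw [hsplit] at this
    linarith
  -- ∑ j, q j = trace Q
  have hqsum : ∑ j, q j = Q.trace := by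
    calc ∑ j, q j = ∑ i, ∑ l, Q i l * ∑ j, f j i * f j l := by
          rw [hq]
          rw [Finset.sum_comm]
          apply Finset.sum_congr rfl; intro i _
          rw [Finset.sum_comm]
          apply Finset.sum_congr rfl; intro l _
          rw [Finset.mul_sum]
          apply Finset.sum_congr rfl; intro j _
          ring
      _ = ∑ i, Q i i := by
          apply Finset.sum_congr rfl; intro i _
          rw [Finset.sum_eq_single i]
          · rw [complete_sum f horth i i, if_pos rfl, mul_one]
          · intro l _ hl
            rw [complete_sum f horth i l, if_neg (fun h => hl h.symm), mul_zero]
          · intro h; exact absurd (Finset.mem_univ i) h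
      _ = Q.trace := rfl
  -- alternate form of q
  have hqalt : ∀ j, q j = ∑ i, ∑ l, f j i * f j l * Q l i := by
    intro j
    calc q j = ∑ l, ∑ i, f j i * Q i l * f j l := by
          simp only [hq]
          exact Finset.sum_comm
      _ = ∑ i, ∑ l, f j i * f j l * Q l i := by
          apply Finset.sum_congr rfl; intro l _
          apply Finset.sum_congr rfl; intro i _
          ring
  -- ∑ j in s, q j = trace (P * Q)
  have hqs : ∑ j ∈ s, q j = (P * Q).trace := by
    calc ∑ j ∈ s, q j
        = ∑ j ∈ s, ∑ i, ∑ l, f j i * f j l * Q l i :=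
          Finset.sum_congr rfl fun j _ => hqalt j
      _ = ∑ i, ∑ j ∈ s, ∑ l, f j i * f j l * Q l i := Finset.sum_comm
      _ = ∑ i, ∑ l, ∑ j ∈ s, f j i * f j l * Q l i :=
          Finset.sum_congr rfl fun i _ => Finset.sum_comm
      _ = ∑ i, ∑ l, P i l * Q l i := by
          apply Finset.sum_congr rfl; intro i _
          apply Finset.sum_congr rfl; intro l _
          rw [hP i l, Finset.sum_mul]
      _ = (P * Q).trace := by simp [Matrix.trace, Matrix.diag, Matrix.mul_apply]
  -- trace (A * P)
  have htrAP : (A * P).trace = ∑ j ∈ s, lam j := by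
    calc (A * P).trace = ∑ i, ∑ l, A i l * P l i := by
          simp [Matrix.trace, Matrix.diag, Matrix.mul_apply]
      _ = ∑ i, ∑ j ∈ s, (∑ l, A i l * f j l) * f j i := by
          apply Finset.sum_congr rfl; intro i _
          calc ∑ l, A i l * P l i = ∑ l, ∑ j ∈ s, A i l * (f j l * f j i) := by
                apply Finset.sum_congr rfl; intro l _
                rw [hP l i, Finset.mul_sum]
            _ = ∑ j ∈ s, ∑ l, A i l * (f j l * f j i) := Finset.sum_comm
            _ = ∑ j ∈ s, (∑ l, A i l * f j l) * f j i := by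
                apply Finset.sum_congr rfl; intro j _
                rw [Finset.sum_mul]
                apply Finset.sum_congr rfl; intro l _
                ring
      _ = ∑ j ∈ s, ∑ i, (∑ l, A i l * f j l) * f j i := Finset.sum_comm
      _ = ∑ j ∈ s, lam j * ∑ i, f j i * f j i := by
          apply Finset.sum_congr rfl; intro j _
          rw [Finset.mul_sum]
          apply Finset.sum_congr rfl; intro i _
          rw [heig j i]
          ring
      _ = ∑ j ∈ s, lam j := by
          apply Finset.sum_congr rfl; intro j _
          rw [orth_sum f horth j j, if_pos rfl, mul_one]
  -- trace (A * Q)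
  have htrAQ : (A * Q).trace = ∑ j, lam j * q j := by
    calc (A * Q).trace = ∑ i, ∑ l, A i l * Q l i := by
          simp [Matrix.trace, Matrix.diag, Matrix.mul_apply]
      _ = ∑ i, ∑ l, ∑ j, (lam j * (f j i * f j l)) * Q l i := by
          apply Finset.sum_congr rfl; intro i _
          apply Finset.sum_congr rfl; intro l _
          rw [spectral A lam f horth heig i l, Finset.sum_mul]
      _ = ∑ j, ∑ i, ∑ l, (lam j * (f j i * f j l)) * Q l i := by
          rw [show (∑ i, ∑ l, ∑ j, (lam j * (f j i * f j l)) * Q l i)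
              = ∑ i, ∑ j, ∑ l, (lam j * (f j i * f j l)) * Q l i
            from Finset.sum_congr rfl fun i _ => Finset.sum_comm]
          exact Finset.sum_comm
      _ = ∑ j, lam j * q j := by
          apply Finset.sum_congr rfl; intro j _
          rw [hqalt j, Finset.mul_sum]
          apply Finset.sum_congr rfl; intro i _
          rw [Finset.mul_sum]
          apply Finset.sum_congr rfl; intro l _
          ring
  -- assemble
  set T := (P * Q).trace with hT
  have hcard : s.card = m := card_filter_lt (le_of_lt hmd)
  have hsum_s : ∑ j ∈ s, (1 - q j) = (m : ℝ) - T := by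
    rw [Finset.sum_sub_distrib, Finset.sum_const, hqs, hcard, nsmul_eq_mul, mul_one]
  have hsplit := Finset.sum_filter_add_sum_filter_not Finset.univ
    (fun j : Fin d => (j : ℕ) < m) q
  set t : Finset (Fin d) := Finset.univ.filter (fun j : Fin d => ¬ (j : ℕ) < m) with ht
  have hsum_t : ∑ j ∈ t, q j = (m : ℝ) - T := by
    have h1 : ∑ j ∈ s, q j + ∑ j ∈ t, q j = (m : ℝ) := by
      rw [hsplit, hqsum, hQt]
    rw [← hqs]
    linarith
  have hsplitlam := Finset.sum_filter_add_sum_filter_not Finset.univ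
    (fun j : Fin d => (j : ℕ) < m) (fun j => lam j * q j)
  have key : (A * (P - Q)).trace
      = ∑ j ∈ s, lam j * (1 - q j) - ∑ j ∈ t, lam j * q j := by
    rw [Matrix.mul_sub, Matrix.trace_sub, htrAP, htrAQ, ← hsplitlam]
    rw [show ∑ j ∈ s, lam j * (1 - q j) = ∑ j ∈ s, lam j - ∑ j ∈ s, lam j * q j by
      rw [← Finset.sum_sub_distrib]
      apply Finset.sum_congr rfl; intro j _; ring]
    ring
  have hb1 : ∀ j ∈ s, lam ⟨m - 1, by omega⟩ * (1 - q j) ≤ lam j * (1 - q j) := by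
    intro j hj
    have hjm : (j : ℕ) < m := by
      rw [hs] at hj
      exact (Finset.mem_filter.mp hj).2
    have hle : j ≤ (⟨m - 1, by omega⟩ : Fin d) := by
      rw [Fin.le_def]
      simp only
      omega
    exact mul_le_mul_of_nonneg_right (hdesc hle) (by linarith [hq1 j])
  have hb2 : ∀ j ∈ t, lam j * q j ≤ lam ⟨m, hmd⟩ * q j := by
    intro j hj
    have hjm : ¬ (j : ℕ) < m := by
      rw [ht] at hj
      exact (Finset.mem_filter.mp hj).2
    have hle : (⟨m, hmd⟩ : Fin d) ≤ j := by
      rw [Fin.le_def]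
      simp only
      omega
    exact mul_le_mul_of_nonneg_right (hdesc hle) (hq0 j)
  calc (lam ⟨m - 1, by omega⟩ - lam ⟨m, hmd⟩) * ((m : ℝ) - T)
      = lam ⟨m - 1, by omega⟩ * ((m : ℝ) - T) - lam ⟨m, hmd⟩ * ((m : ℝ) - T) := by ring
    _ = ∑ j ∈ s, lam ⟨m - 1, by omega⟩ * (1 - q j) - ∑ j ∈ t, lam ⟨m, hmd⟩ * q j := by
        rw [← Finset.mul_sum, ← Finset.mul_sum, hsum_s, hsum_t]
    _ ≤ ∑ j ∈ s, lam j * (1 - q j) - ∑ j ∈ t, lam j * q j :=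
        sub_le_sub (Finset.sum_le_sum hb1) (Finset.sum_le_sum hb2)
    _ = (A * (P - Q)).trace := key.symm

end Curvature

section Piece

variable (E P Q : Matrix (Fin d) (Fin d) ℝ)

lemma resid (hPs : Pᵀ = P) (hPi : P * P = P) (hQs : Qᵀ = Q) (hQi : Q * Q = Q) :
    fip ((1 - P) * Q) ((1 - P) * Q) = Q.trace - (P * Q).trace := by
  have h1Ps : (1 - P)ᵀ = 1 - P := by rw [Matrix.transpose_sub, Matrix.transpose_one, hPs]
  have h1Pi : (1 - P) * (1 - P) = 1 - P := by
    rw [mul_sub, mul_one, sub_mul, one_mul, hPi, sub_self, sub_zero]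
  rw [fip_eq_trace, Matrix.transpose_mul, hQs, h1Ps]
  have hassoc : (1 - P) * Q * (Q * (1 - P)) = (1 - P) * Q * (1 - P) := by
    rw [← mul_assoc, mul_assoc (1 - P) Q Q, hQi]
  rw [hassoc, Matrix.trace_mul_cycle, h1Pi, sub_mul, one_mul,
    Matrix.trace_sub]

lemma piece (hEs : Eᵀ = E) (hPs : Pᵀ = P) (hPi : P * P = P)
    (hQs : Qᵀ = Q) (hQi : Q * Q = Q) :
    (E * ((1 - P) * Q)).trace ≤
      specNorm' E * Real.sqrt Q.trace * Real.sqrt (Q.trace - (P * Q).trace) := by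
  set M := (1 - P) * Q with hM
  have hMQ : M * Q = M := by rw [hM, mul_assoc, hQi]
  have h1 : (E * M).trace = ((Q * E) * M).trace := by
    conv_lhs => rw [← hMQ]
    rw [show E * (M * Q) = (E * M) * Q from (mul_assoc E M Q).symm,
      Matrix.trace_mul_comm, ← mul_assoc]
  have h2 : ((Q * E) * M).trace ≤
      Real.sqrt (fip (Q * E) (Q * E)) * Real.sqrt (fip M M) := trace_mul_le _ _
  have h3 : fip (Q * E) (Q * E) ≤ (specNorm' E) ^ 2 * fip Q Q := by
    have ht : (E * Q)ᵀ = Q * E := by rw [Matrix.transpose_mul, hEs, hQs]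
    calc fip (Q * E) (Q * E) = fip (E * Q) (E * Q) := by rw [← ht, fip_transpose]
      _ ≤ (specNorm' E) ^ 2 * fip Q Q := fip_mul_left_le E Q
  have hfQ : fip Q Q = Q.trace := by
    rw [fip_eq_trace, hQs, hQi]
  have h4 : Real.sqrt (fip (Q * E) (Q * E)) ≤ specNorm' E * Real.sqrt Q.trace := by
    calc Real.sqrt (fip (Q * E) (Q * E)) ≤ Real.sqrt ((specNorm' E) ^ 2 * fip Q Q) :=
          Real.sqrt_le_sqrt h3
      _ = specNorm' E * Real.sqrt Q.trace := by
          have hnn : (0:ℝ) ≤ specNorm' E := by rw [specNorm']; exact norm_nonneg _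
          rw [Real.sqrt_mul (sq_nonneg _), Real.sqrt_sq hnn, hfQ]
  have h5 : fip M M = Q.trace - (P * Q).trace := resid P Q hPs hPi hQs hQi
  calc (E * M).trace ≤ Real.sqrt (fip (Q * E) (Q * E)) * Real.sqrt (fip M M) := by
        rw [h1]; exact h2
    _ ≤ (specNorm' E * Real.sqrt Q.trace) * Real.sqrt (fip M M) :=
        mul_le_mul_of_nonneg_right h4 (Real.sqrt_nonneg _)
    _ = specNorm' E * Real.sqrt Q.trace * Real.sqrt (Q.trace - (P * Q).trace) := by rw [h5]

lemma specNorm'_neg : specNorm' (-E) = specNorm' E := by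
  rw [specNorm', specNorm', map_neg, norm_neg]

end Piece

end DKaux



/-- Subspace Davis–Kahan inequality (Vu–Lei 2013): for symmetric `S, Ŝ` with
`λ_m(S) > λ_{m+1}(S)`, the orthogonal projections `P^m(Ŝ), P^m(S)` onto the
spans of the `m` leading eigenvectors satisfy
`‖P^m(Ŝ) - P^m(S)‖_F ≤ 2√(2m)/(λ_m(S) - λ_{m+1}(S)) ‖Ŝ - S‖₂`.
Here the eigensystems are given by orthonormal families of eigenvectors with
eigenvalues in descending order. -/
theorem davis_kahan_subspace {d : ℕ} (m : ℕ) (hm1 : 1 ≤ m) (hmd : m < d)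
    (S Shat : Matrix (Fin d) (Fin d) ℝ) (hS : S.IsSymm) (hShat : Shat.IsSymm)
    -- orthonormal eigensystem of `S` with descending eigenvalues
    (lam : Fin d → ℝ) (f : Fin d → EuclideanSpace ℝ (Fin d))
    (horthf : Orthonormal ℝ f) (hdescf : Antitone lam)
    (heigf : ∀ j i, (∑ k, S i k * f j k) = lam j * f j i)
    -- orthonormal eigensystem of `Ŝ` with descending eigenvalues
    (mu : Fin d → ℝ) (g : Fin d → EuclideanSpace ℝ (Fin d))
    (horthg : Orthonormal ℝ g) (hdescg : Antitone mu)
    (heigg : ∀ j i, (∑ k, Shat i k * g j k) = mu j * g j i)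
    -- eigengap `λ_m(S) > λ_{m+1}(S)`
    (hgap : lam ⟨m, hmd⟩ < lam ⟨m - 1, by omega⟩)
    -- the projections onto the spans of the `m` leading eigenvectors
    (Pm Pmhat : Matrix (Fin d) (Fin d) ℝ)
    (hPm : ∀ i k, Pm i k = ∑ j ∈ Finset.univ.filter (fun j : Fin d => (j : ℕ) < m),
      f j i * f j k)
    (hPmhat : ∀ i k, Pmhat i k = ∑ j ∈ Finset.univ.filter (fun j : Fin d => (j : ℕ) < m),
      g j i * g j k) :
    frobNorm (Pmhat - Pm) ≤
      2 * Real.sqrt (2 * m) / (lam ⟨m - 1, by omega⟩ - lam ⟨m, hmd⟩) *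
        specNorm (Shat - S) := by
  classical
  set E : Matrix (Fin d) (Fin d) ℝ := Shat - S with hE
  have hEs : Eᵀ = E := by rw [hE, Matrix.transpose_sub, hS.eq, hShat.eq]
  -- projector properties
  have hPs : Pmᵀ = Pm := DKaux.proj_symm f Pm hPm
  have hPi : Pm * Pm = Pm := DKaux.proj_idem f Pm hPm horthf
  have hPt : Pm.trace = (m : ℝ) := DKaux.proj_trace f Pm hPm horthf (le_of_lt hmd)
  have hQs : Pmhatᵀ = Pmhat := DKaux.proj_symm g Pmhat hPmhat
  have hQi : Pmhat * Pmhat = Pmhat := DKaux.proj_idem g Pmhat hPmhat horthg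
  have hQt : Pmhat.trace = (m : ℝ) := DKaux.proj_trace g Pmhat hPmhat horthg (le_of_lt hmd)
  set T : ℝ := (Pm * Pmhat).trace with hT
  have hTm : (Pmhat * Pm).trace = T := Matrix.trace_mul_comm _ _
  set s0 : ℝ := (m : ℝ) - T with hs0
  have hs0nonneg : 0 ≤ s0 := by
    have h := DKaux.fip_self_nonneg ((1 - Pm) * Pmhat)
    rw [DKaux.resid Pm Pmhat hPs hPi hQs hQi, hQt] at h
    exact h
  set δ : ℝ := lam ⟨m - 1, by omega⟩ - lam ⟨m, hmd⟩ with hδ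
  have hδpos : 0 < δ := sub_pos.2 hgap
  -- curvature lower bound
  have hcurv1 : δ * s0 ≤ (S * (Pm - Pmhat)).trace := by
    have := DKaux.curvature S lam f hm1 hmd horthf hdescf heigf Pm Pmhat hPm hQs hQi hQt
    exact this
  have hcurv2 : (0 : ℝ) ≤ (Shat * (Pmhat - Pm)).trace := by
    have h := DKaux.curvature Shat mu g hm1 hmd horthg hdescg heigg Pmhat Pm hPmhat
      hPs hPi hPt
    have hmugap : (0 : ℝ) ≤ mu ⟨m - 1, by omega⟩ - mu ⟨m, hmd⟩ := by
      have hle : (⟨m - 1, by omega⟩ : Fin d) ≤ ⟨m, hmd⟩ := by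
        rw [Fin.le_def]; simp only; omega
      linarith [hdescg hle]
    have hs0' : (0 : ℝ) ≤ (m : ℝ) - (Pmhat * Pm).trace := by rw [hTm]; exact hs0nonneg
    calc (0:ℝ) ≤ (mu ⟨m - 1, by omega⟩ - mu ⟨m, hmd⟩) * ((m : ℝ) - (Pmhat * Pm).trace) :=
          mul_nonneg hmugap hs0'
      _ ≤ (Shat * (Pmhat - Pm)).trace := h
  have hlow : δ * s0 ≤ (E * (Pmhat - Pm)).trace := by
    have hsplit : (E * (Pmhat - Pm)).trace
        = (Shat * (Pmhat - Pm)).trace + (S * (Pm - Pmhat)).trace := by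
      rw [hE, Matrix.sub_mul, Matrix.trace_sub]
      have : S * (Pm - Pmhat) = -(S * (Pmhat - Pm)) := by
        rw [Matrix.mul_sub, Matrix.mul_sub, neg_sub]
      rw [this, Matrix.trace_neg]
      ring
    rw [hsplit]
    linarith [hcurv1, hcurv2]
  -- upper bound
  have hmatid : E * (Pmhat - Pm) = E * ((1 - Pm) * Pmhat) - E * (Pm * (1 - Pmhat)) := by
    rw [← Matrix.mul_sub]
    congr 1
    rw [Matrix.sub_mul, Matrix.one_mul, Matrix.mul_sub, Matrix.mul_one]
    abel
  have htrans : (E * (Pm * (1 - Pmhat))).trace = (E * ((1 - Pmhat) * Pm)).trace := by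
    have h1Qs : (1 - Pmhat)ᵀ = 1 - Pmhat := by
      rw [Matrix.transpose_sub, Matrix.transpose_one, hQs]
    conv_lhs => rw [← Matrix.trace_transpose, Matrix.transpose_mul, Matrix.transpose_mul,
      hEs, h1Qs, hPs]
    rw [Matrix.trace_mul_comm]
  have hub1 : (E * ((1 - Pm) * Pmhat)).trace
      ≤ DKaux.specNorm' E * Real.sqrt (m : ℝ) * Real.sqrt s0 := by
    have h := DKaux.piece E Pm Pmhat hEs hPs hPi hQs hQi
    rw [hQt, ← hT, ← hs0] at h
    exact h
  have hub2 : ((-E) * ((1 - Pmhat) * Pm)).trace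
      ≤ DKaux.specNorm' E * Real.sqrt (m : ℝ) * Real.sqrt s0 := by
    have hnEs : (-E)ᵀ = -E := by rw [Matrix.transpose_neg, hEs]
    have h := DKaux.piece (-E) Pmhat Pm hnEs hQs hQi hPs hPi
    rw [hPt, hTm, ← hs0, DKaux.specNorm'_neg] at h
    exact h
  have hup : (E * (Pmhat - Pm)).trace
      ≤ 2 * (DKaux.specNorm' E * Real.sqrt (m : ℝ) * Real.sqrt s0) := by
    rw [hmatid, Matrix.trace_sub, htrans]
    have hneg : ((-E) * ((1 - Pmhat) * Pm)).trace = -(E * ((1 - Pmhat) * Pm)).trace := by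
      rw [Matrix.neg_mul, Matrix.trace_neg]
    linarith [hub1, hub2, hneg ▸ hub2]
  -- key scalar inequality
  have hkey : δ * s0 ≤ 2 * (DKaux.specNorm' E * Real.sqrt (m : ℝ) * Real.sqrt s0) :=
    le_trans hlow hup
  -- Frobenius norm identity
  have hfip : DKaux.fip (Pmhat - Pm) (Pmhat - Pm) = 2 * s0 := by
    rw [DKaux.fip_eq_trace]
    have hΔt : (Pmhat - Pm)ᵀ = Pmhat - Pm := by rw [Matrix.transpose_sub, hQs, hPs]
    rw [hΔt]
    have hexp : (Pmhat - Pm) * (Pmhat - Pm)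
        = Pmhat * Pmhat - Pm * Pmhat - (Pmhat * Pm - Pm * Pm) := by
      rw [Matrix.mul_sub, Matrix.sub_mul, Matrix.sub_mul]
    rw [hexp, Matrix.trace_sub, Matrix.trace_sub, Matrix.trace_sub, hQi, hPi, hQt, hPt,
      hTm, ← hT, hs0]
    ring
  have hfrob : frobNorm (Pmhat - Pm) = Real.sqrt (2 * s0) := by
    rw [frobNorm, ← hfip, DKaux.fip]
    congr 1
    apply Finset.sum_congr rfl; intro j _
    apply Finset.sum_congr rfl; intro k _
    rw [sq]
  have hspec : specNorm (Shat - S) = DKaux.specNorm' E := rfl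
  have hσ : (0 : ℝ) ≤ DKaux.specNorm' E := by
    rw [DKaux.specNorm']; exact norm_nonneg _
  rw [hfrob, hspec]
  set σ := DKaux.specNorm' E with hσdef
  have hss : Real.sqrt s0 * Real.sqrt s0 = s0 := Real.mul_self_sqrt hs0nonneg
  by_cases h0 : Real.sqrt s0 = 0
  · have hs00 : s0 = 0 := by rw [← hss, h0, mul_zero]
    rw [hs00, mul_zero, Real.sqrt_zero]
    apply mul_nonneg (div_nonneg (by positivity) hδpos.le) hσ
  · have hpos : 0 < Real.sqrt s0 := lt_of_le_of_ne (Real.sqrt_nonneg _) (Ne.symm h0)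
    have hkey2 : δ * Real.sqrt s0 ≤ 2 * (σ * Real.sqrt (m : ℝ)) := by
      apply le_of_mul_le_mul_right _ hpos
      calc δ * Real.sqrt s0 * Real.sqrt s0 = δ * s0 := by rw [mul_assoc, hss]
        _ ≤ 2 * (σ * Real.sqrt (m : ℝ) * Real.sqrt s0) := hkey
        _ = 2 * (σ * Real.sqrt (m : ℝ)) * Real.sqrt s0 := by ring
    rw [Real.sqrt_mul (by norm_num : (0:ℝ) ≤ 2) s0,
      Real.sqrt_mul (by norm_num : (0:ℝ) ≤ 2) (m : ℝ),
      div_mul_eq_mul_div, le_div_iff₀ hδpos]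
    nlinarith [mul_le_mul_of_nonneg_left hkey2 (Real.sqrt_nonneg 2), Real.sqrt_nonneg 2,
      Real.sqrt_nonneg s0, Real.sqrt_nonneg (m : ℝ)]
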